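/- Let p be a prime, G a t.d.l.c. group, and k ≥ 1 an integer. If G admits a left-invariant normed ℚ_p-mean of operator norm < p^k, then G is p^k-free. In particular, every normed p-adic amenable group is p^ℕ-free, and ‖G‖_p ≥ min{p^j : j ≥ 0 and G is p^{j+1}-free}. -/

import Mathlib

open BoundedContinuousFunction

/-- The left translate of a bounded continuous function: `(leftTranslate 𝕂 g f) x = f (g⁻¹ * x)`. -/
noncomputable def leftTranslate {G : Type*} [Group G] [TopologicalSpace G] [IsTopologicalGroup G]
    (𝕂 : Type*) [NormedField 𝕂] (g : G) (f : G →ᵇ 𝕂) : G →ᵇ 𝕂 :=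
  f.compContinuous ⟨fun x => g⁻¹ * x, continuous_mul_left g⁻¹⟩

/-- `m` is a left-invariant normed `𝕂`-mean on `G`: a bounded (equivalently, continuous)
linear functional on the space of bounded continuous `𝕂`-valued functions on `G`, sending the
constant function `𝟙_G` to `1`, and invariant under left translation. -/
def IsInvariantMean (𝕂 : Type*) [NormedField 𝕂] (G : Type*) [Group G] [TopologicalSpace G]
    [IsTopologicalGroup G] (m : (G →ᵇ 𝕂) →ₗ[𝕂] 𝕂) : Prop :=
  (∃ C : ℝ, ∀ f : G →ᵇ 𝕂, ‖m f‖ ≤ C * ‖f‖) ∧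
    m (BoundedContinuousFunction.const G (1 : 𝕂)) = 1 ∧
    ∀ (g : G) (f : G →ᵇ 𝕂), m (leftTranslate 𝕂 g f) = m f

/-- The operator norm of the linear functional `m` is at most `C`. -/
def MeanNormLE (𝕂 : Type*) [NormedField 𝕂] (G : Type*) [Group G] [TopologicalSpace G]
    [IsTopologicalGroup G] (m : (G →ᵇ 𝕂) →ₗ[𝕂] 𝕂) (C : ℝ) : Prop :=
  ∀ f : G →ᵇ 𝕂, ‖m f‖ ≤ C * ‖f‖

/-- A topological group is locally elliptic if every compact subset is contained in a
compact subgroup. -/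
def IsLocallyElliptic (G : Type*) [Group G] [TopologicalSpace G] : Prop :=
  ∀ K : Set G, IsCompact K → ∃ H : Subgroup G, IsCompact (H : Set G) ∧ K ⊆ (H : Set G)

/-- `G` is `m`-free: for every pair of open subgroups `V ≤ U` of `G` with finite index
`[U : V]`, `m` does not divide `[U : V]`. -/
def IsFreeOf (G : Type*) [Group G] [TopologicalSpace G] (m : ℕ) : Prop :=
  ∀ U V : Subgroup G, IsOpen (U : Set G) → IsOpen (V : Set G) → V ≤ U →
    V.relIndex U ≠ 0 → ¬ m ∣ V.relIndex U

section Core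

variable {p : ℕ} [Fact p.Prime] {G : Type*} [Group G] [TopologicalSpace G] [IsTopologicalGroup G]

lemma mean_one_le {m : (G →ᵇ ℚ_[p]) →ₗ[ℚ_[p]] ℚ_[p]}
    (hm : IsInvariantMean ℚ_[p] G m) {C : ℝ} (hC : MeanNormLE ℚ_[p] G m C) : 1 ≤ C := by
  have h := hC (BoundedContinuousFunction.const G (1 : ℚ_[p]))
  rw [hm.2.1] at h
  simpa using h

lemma core_lemma {m : (G →ᵇ ℚ_[p]) →ₗ[ℚ_[p]] ℚ_[p]}
    (hm : IsInvariantMean ℚ_[p] G m) {C : ℝ} (hC : MeanNormLE ℚ_[p] G m C)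
    {k : ℕ} {U V : Subgroup G} (hUo : IsOpen (U : Set G)) (hVo : IsOpen (V : Set G))
    (hVU : V ≤ U) (hne : V.relIndex U ≠ 0) (hdvd : p ^ k ∣ V.relIndex U) :
    (p : ℝ) ^ k ≤ C := by
  classical
  set r : G → G := fun x => (Quotient.mk (QuotientGroup.rightRel U) x).out with hr_def
  have hr : ∀ x : G, x * (r x)⁻¹ ∈ U := by
    intro x
    have h := Quotient.exact ((Quotient.mk (QuotientGroup.rightRel U) x).out_eq)
    exact (QuotientGroup.rightRel_apply).mp h
  have hrc : ∀ x y : G, y * x⁻¹ ∈ U → r y = r x := by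
    intro x y h
    have : (Quotient.mk (QuotientGroup.rightRel U) y) = (Quotient.mk (QuotientGroup.rightRel U) x) := by
      exact Quotient.sound ((QuotientGroup.rightRel_apply).mpr (by simpa using U.inv_mem h))
    simp only [hr_def, this]
  set f : G → ℚ_[p] := fun x => if x * (r x)⁻¹ ∈ V then 1 else 0 with hf_def
  have hVc : IsClosed (V : Set G) := Subgroup.isClosed_of_isOpen V hVo
  have hfc : Continuous f := by
    apply IsLocallyConstant.continuous
    rw [IsLocallyConstant.iff_exists_open]
    intro x
    by_cases hx : x * (r x)⁻¹ ∈ V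
    · refine ⟨{y | y * x⁻¹ ∈ U} ∩ {y | y * (r x)⁻¹ ∈ V}, ?_, ⟨by simp [U.one_mem], hx⟩, ?_⟩
      · exact (hUo.preimage (continuous_mul_right x⁻¹)).inter
          (hVo.preimage (continuous_mul_right (r x)⁻¹))
      · rintro y ⟨h1, h2⟩
        simp only [Set.mem_setOf_eq] at h1 h2
        simp only [hf_def, hrc x y h1, h2, hx, if_true]
    · refine ⟨{y | y * x⁻¹ ∈ U} ∩ {y | y * (r x)⁻¹ ∈ V}ᶜ, ?_, ⟨by simp [U.one_mem], hx⟩, ?_⟩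
      · exact (hUo.preimage (continuous_mul_right x⁻¹)).inter
          (isOpen_compl_iff.mpr (hVc.preimage (continuous_mul_right (r x)⁻¹)))
      · rintro y ⟨h1, h2⟩
        simp only [Set.mem_setOf_eq] at h1
        simp only [hf_def, hrc x y h1]
        simp only [Set.mem_compl_iff, Set.mem_setOf_eq] at h2
        simp [h2, hx]
  have hfb : ∀ x, ‖f x‖ ≤ 1 := by
    intro x
    simp only [hf_def]
    split <;> simp
  set F : G →ᵇ ℚ_[p] := BoundedContinuousFunction.ofNormedAddCommGroup f hfc 1 hfb with hF_def
  have hFnorm : ‖F‖ ≤ 1 := BoundedContinuousFunction.norm_ofNormedAddCommGroup_le hfc zero_le_one hfb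
  set Q := U ⧸ V.subgroupOf U with hQ_def
  have hcard : Nat.card Q = V.relIndex U := rfl
  haveI : Finite Q := Nat.finite_of_card_ne_zero (by rw [hcard]; exact hne)
  haveI : Fintype Q := Fintype.ofFinite Q
  have key : ∑ q : Q, leftTranslate ℚ_[p] ((q.out : U) : G) F
      = BoundedContinuousFunction.const G (1 : ℚ_[p]) := by
    ext x
    have hu : x * (r x)⁻¹ ∈ U := hr x
    have hterm : ∀ q : Q, (leftTranslate ℚ_[p] ((q.out : U) : G) F) x
        = if (QuotientGroup.mk (⟨x * (r x)⁻¹, hu⟩ : U) : Q) = q then (1 : ℚ_[p]) else 0 := by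
      intro q
      have hg : ((q.out : U) : G) ∈ U := (q.out : U).2
      have hre : r (((q.out : U) : G)⁻¹ * x) = r x :=
        hrc x _ (by simpa [mul_assoc] using U.inv_mem hg)
      have hval : (leftTranslate ℚ_[p] ((q.out : U) : G) F) x
          = if ((q.out : U) : G)⁻¹ * (x * (r x)⁻¹) ∈ V then (1 : ℚ_[p]) else 0 := by
        simp only [leftTranslate, BoundedContinuousFunction.compContinuous_apply,
          ContinuousMap.coe_mk, hF_def, BoundedContinuousFunction.coe_ofNormedAddCommGroup,
          hf_def, hre, mul_assoc]
      rw [hval]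
      congr 1
      have : ((QuotientGroup.mk (⟨x * (r x)⁻¹, hu⟩ : U) : Q) = q)
          ↔ (q.out)⁻¹ * (⟨x * (r x)⁻¹, hu⟩ : U) ∈ V.subgroupOf U := by
        rw [← QuotientGroup.out_eq' q, eq_comm, QuotientGroup.eq]
        rw [QuotientGroup.out_eq' q]
      rw [eq_iff_iff, this, Subgroup.mem_subgroupOf]
      push_cast
      rfl
    simp only [BoundedContinuousFunction.coe_sum, Finset.sum_apply, hterm,
      BoundedContinuousFunction.const_apply]
    rw [Finset.sum_ite_eq Finset.univ ((QuotientGroup.mk (⟨x * (r x)⁻¹, hu⟩ : U) : Q))]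
    simp
  have hsum : (V.relIndex U : ℚ_[p]) * m F = 1 := by
    have := congrArg m key
    rw [hm.2.1, map_sum] at this
    simp only [hm.2.2] at this
    rw [Finset.sum_const, Finset.card_univ, nsmul_eq_mul] at this
    rw [← this, ← hcard, Nat.card_eq_fintype_card]
  have hnz : (V.relIndex U : ℚ_[p]) ≠ 0 := Nat.cast_ne_zero.mpr hne
  have hmF : m F = (V.relIndex U : ℚ_[p])⁻¹ := by
    field_simp at hsum ⊢
    linear_combination hsum
  have hnormn : ‖((V.relIndex U : ℤ) : ℚ_[p])‖ ≤ (p : ℝ) ^ (-(k : ℤ)) :=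
    (Padic.norm_int_le_pow_iff_dvd _ _).mpr (by exact_mod_cast hdvd)
  have hnormn' : ‖(V.relIndex U : ℚ_[p])‖ ≤ (p : ℝ) ^ (-(k : ℤ)) := by
    push_cast at hnormn; exact_mod_cast hnormn
  have hpos : (0 : ℝ) < ‖(V.relIndex U : ℚ_[p])‖ := norm_pos_iff.mpr hnz
  have hlow : (p : ℝ) ^ k ≤ ‖m F‖ := by
    rw [hmF, norm_inv]
    have hppos : (0 : ℝ) < (p : ℝ) ^ (-(k : ℤ)) :=
      zpow_pos (by exact_mod_cast (Fact.out : p.Prime).pos) _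
    calc (p : ℝ) ^ k = ((p : ℝ) ^ (-(k : ℤ)))⁻¹ := by
          rw [← zpow_natCast, ← zpow_neg, neg_neg]
      _ ≤ ‖(V.relIndex U : ℚ_[p])‖⁻¹ := by
          exact inv_anti₀ hpos hnormn'
  have hCpos : (0 : ℝ) ≤ C := le_trans zero_le_one (mean_one_le hm hC)
  calc (p : ℝ) ^ k ≤ ‖m F‖ := hlow
    _ ≤ C * ‖F‖ := hC F
    _ ≤ C * 1 := by exact mul_le_mul_of_nonneg_left hFnorm hCpos
    _ = C := mul_one C

end Core


section Helpers

variable {p : ℕ} [Fact p.Prime] {G : Type*} [Group G] [TopologicalSpace G] [IsTopologicalGroup G]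

lemma freeOf_of_lt {m : (G →ᵇ ℚ_[p]) →ₗ[ℚ_[p]] ℚ_[p]}
    (hm : IsInvariantMean ℚ_[p] G m) {C : ℝ} (hC : MeanNormLE ℚ_[p] G m C)
    {k : ℕ} (hCk : C < (p : ℝ) ^ k) : IsFreeOf G (p ^ k) := by
  intro U V hUo hVo hVU hne hdvd
  exact absurd (core_lemma hm hC hUo hVo hVU hne hdvd) (not_le.mpr hCk)

lemma exists_pow_free {m : (G →ᵇ ℚ_[p]) →ₗ[ℚ_[p]] ℚ_[p]}
    (hm : IsInvariantMean ℚ_[p] G m) : ∃ j : ℕ, 1 ≤ j ∧ IsFreeOf G (p ^ j) := by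
  obtain ⟨C, hC⟩ := hm.1
  have hp1 : (1 : ℝ) < p := by exact_mod_cast (Fact.out : p.Prime).one_lt
  obtain ⟨j, hj⟩ := pow_unbounded_of_one_lt C hp1
  refine ⟨max j 1, le_max_right _ _, freeOf_of_lt hm hC ?_⟩
  exact lt_of_lt_of_le hj (pow_le_pow_right₀ (le_of_lt hp1) (le_max_left _ _))

end Helpers

/-- For a prime `p`, a t.d.l.c. group `G` and `k ≥ 1`: if `G` admits a
left-invariant normed `ℚ_p`-mean of operator norm `< p^k` then `G` is `p^k`-free. In particular
every normed `p`-adic amenable group is `p^ℕ`-free, and `‖G‖_p ≥ min {p^j : G is p^(j+1)-free}`. -/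
theorem pPowFree_of_small_mean (p : ℕ) [Fact p.Prime]
    (G : Type*) [Group G] [TopologicalSpace G] [IsTopologicalGroup G]
    [LocallyCompactSpace G] [TotallyDisconnectedSpace G] [T2Space G]
    (k : ℕ) (hk : 1 ≤ k) :
    ((∃ m : (G →ᵇ ℚ_[p]) →ₗ[ℚ_[p]] ℚ_[p], IsInvariantMean ℚ_[p] G m ∧
        (∃ C : ℝ, C < (p : ℝ) ^ k ∧ MeanNormLE ℚ_[p] G m C)) → IsFreeOf G (p ^ k)) ∧
    ((∃ m : (G →ᵇ ℚ_[p]) →ₗ[ℚ_[p]] ℚ_[p], IsInvariantMean ℚ_[p] G m) →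
      ∃ j : ℕ, 1 ≤ j ∧ IsFreeOf G (p ^ j)) ∧
    ((∃ m : (G →ᵇ ℚ_[p]) →ₗ[ℚ_[p]] ℚ_[p], IsInvariantMean ℚ_[p] G m) →
      ∃ j : ℕ, IsFreeOf G (p ^ (j + 1)) ∧ (∀ i : ℕ, IsFreeOf G (p ^ (i + 1)) → j ≤ i) ∧
        ∀ m : (G →ᵇ ℚ_[p]) →ₗ[ℚ_[p]] ℚ_[p], IsInvariantMean ℚ_[p] G m →
          ∀ C : ℝ, MeanNormLE ℚ_[p] G m C → (p : ℝ) ^ j ≤ C) := by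
  refine ⟨?_, ?_, ?_⟩
  · rintro ⟨m, hm, C, hCk, hC⟩
    exact freeOf_of_lt hm hC hCk
  · rintro ⟨m, hm⟩
    exact exists_pow_free hm
  · rintro ⟨m, hm⟩
    classical
    have hex : ∃ j : ℕ, IsFreeOf G (p ^ (j + 1)) := by
      obtain ⟨j, hj1, hjf⟩ := exists_pow_free hm
      exact ⟨j - 1, by rwa [Nat.sub_add_cancel hj1]⟩
    refine ⟨Nat.find hex, Nat.find_spec hex, fun i hi => Nat.find_min' hex hi, ?_⟩
    intro m' hm' C hC
    by_contra hlt
    push_neg at hlt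
    rcases Nat.eq_zero_or_pos (Nat.find hex) with h0 | hpos
    · rw [h0, pow_zero] at hlt
      exact absurd (mean_one_le hm' hC) (not_le.mpr hlt)
    · have hfree : IsFreeOf G (p ^ Nat.find hex) := freeOf_of_lt hm' hC hlt
      have hle : Nat.find hex ≤ Nat.find hex - 1 :=
        Nat.find_min' hex (by rwa [Nat.sub_add_cancel hpos])
      omega
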